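/- Let K be a field of characteristic ≠ 2, 3 and let L be a Lie algebra over K with a basis e₋, h, e₊ satisfying ⁅e₋, h⁆ = −e₋, ⁅e₊, h⁆ = e₊, ⁅e₋, e₊⁆ = h (so L ≅ sl(2)). Then a K-linear map φ : L → L is a Hom-Lie structure on L if and only if ⁅h, φ(h)⁆ + ⁅e₋, φ(e₊)⁆ + ⁅e₊, φ(e₋)⁆ = 0. -/

import Mathlib

/-- For `L ≅ sl(2)` over a field of characteristic `≠ 2, 3`, with basis
`e₋, h, e₊` satisfying `⁅e₋,h⁆ = -e₋`, `⁅e₊,h⁆ = e₊`, `⁅e₋,e₊⁆ = h`, a linear map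
`φ : L → L` is a Hom-Lie structure iff `⁅h, φ h⁆ + ⁅e₋, φ e₊⁆ + ⁅e₊, φ e₋⁆ = 0`. -/
theorem homLie_sl2_iff (K L : Type*) [Field K] [LieRing L] [LieAlgebra K L]
    (h2 : (2 : K) ≠ 0) (h3 : (3 : K) ≠ 0)
    (B : Module.Basis (Fin 3) K L) (em h ep : L)
    (hB0 : B 0 = em) (hB1 : B 1 = h) (hB2 : B 2 = ep)
    (br1 : ⁅em, h⁆ = -em) (br2 : ⁅ep, h⁆ = ep) (br3 : ⁅em, ep⁆ = h)
    (φ : L →ₗ[K] L) :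
    (∀ x y z : L, ⁅⁅x, y⁆, φ z⁆ + ⁅⁅z, x⁆, φ y⁆ + ⁅⁅y, z⁆, φ x⁆ = 0) ↔
      ⁅h, φ h⁆ + ⁅em, φ ep⁆ + ⁅ep, φ em⁆ = 0 := by
  have br1' : ⁅h, em⁆ = em := by rw [← lie_skew, br1, neg_neg]
  have br2' : ⁅h, ep⁆ = -ep := by rw [← lie_skew, br2]
  have br3' : ⁅ep, em⁆ = -h := by rw [← lie_skew, br3]
  constructor
  · intro hJ
    have := hJ ep em h
    rw [br3', br1, br2'] at this
    simp only [neg_lie, lie_neg, ← neg_add] at this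
    rw [neg_eq_zero] at this
    linear_combination (norm := module) this
  · intro hc x y z
    obtain ⟨a0, a1, a2, hx⟩ : ∃ a0 a1 a2 : K, x = a0 • em + a1 • h + a2 • ep := by
      refine ⟨B.repr x 0, B.repr x 1, B.repr x 2, ?_⟩
      have := B.sum_repr x
      rw [Fin.sum_univ_three, hB0, hB1, hB2] at this
      exact this.symm
    obtain ⟨b0, b1, b2, hy⟩ : ∃ b0 b1 b2 : K, y = b0 • em + b1 • h + b2 • ep := by
      refine ⟨B.repr y 0, B.repr y 1, B.repr y 2, ?_⟩
      have := B.sum_repr y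
      rw [Fin.sum_univ_three, hB0, hB1, hB2] at this
      exact this.symm
    obtain ⟨c0, c1, c2, hz⟩ : ∃ c0 c1 c2 : K, z = c0 • em + c1 • h + c2 • ep := by
      refine ⟨B.repr z 0, B.repr z 1, B.repr z 2, ?_⟩
      have := B.sum_repr z
      rw [Fin.sum_univ_three, hB0, hB1, hB2] at this
      exact this.symm
    subst hx hy hz
    simp only [map_add, map_smul, add_lie, lie_add, smul_lie, lie_smul, smul_add, smul_smul,
      br1, br2, br3, br1', br2', br3', lie_self, neg_lie, lie_neg, smul_neg, zero_lie, lie_zero,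
      smul_zero]
    linear_combination (norm := module)
      (-(a0*b1*c2) + a0*b2*c1 + a1*b0*c2 - a1*b2*c0 - a2*b0*c1 + a2*b1*c0) • hc
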